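/- Harmonic-type product identity for elementary factorial values: ζ_{(r,1),1}((1,𝐤;2),(2)) · ζ(2) = ζ_{(r,1),2}((1,𝐤;2),(2,2)) + ζ_{(r,1),1}((1,𝐤;2),(4)) + Σ over m₁ < m₂ and hook fillings a ≤ b₂ ≤ ⋯ ≤ b_r, a < c of (∏_{j=2}^r b_j^{-k_j}) / (m₁² m₂² (m₁+a)(m₁+c)²), where ζ_{(r,1),s}((1,𝐤;2),t) = Σ over chains m₁ < ⋯ < m_s and hook fillings of ∏ m_i^{-t_i} · (m_s+a)^{-1} (m_s+c)^{-2} ∏ b_j^{-k_j}. -/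

import Mathlib

open scoped ENNReal
open ENNReal

lemma real_ineq (x : ℝ) (hx : 1 ≤ x) : ((x:ℝ)^2)⁻¹ ≤ 2/x - 2/(x+1) := by
  have h0 : (0:ℝ) < x := by linarith
  have h1 : (0:ℝ) < x + 1 := by linarith
  rw [div_sub_div _ _ h0.ne' h1.ne', inv_eq_one_div, div_le_div_iff₀ (by positivity) (by positivity)]
  nlinarith

lemma telescope (a N : ℕ) : ∑ i ∈ Finset.range N, (2/((a:ℝ)+i) - 2/((a:ℝ)+i+1)) = 2/a - 2/(a+N) := by
  have h : ∀ i : ℕ, 2/((a:ℝ)+i) - 2/((a:ℝ)+i+1)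
      = (fun i : ℕ => 2/((a:ℝ)+i)) i - (fun i : ℕ => 2/((a:ℝ)+i)) (i+1) := by
    intro i; push_cast; ring
  rw [Finset.sum_congr rfl (fun i _ => h i), Finset.sum_range_sub']
  norm_num

def shiftEquiv (a : ℕ) : ℕ ≃ ↑{x : ℕ | a ≤ x} where
  toFun := fun i => ⟨a + i, Nat.le_add_right _ _⟩
  invFun := fun x => x.1 - a
  left_inv := fun i => by simp
  right_inv := fun x => by ext; exact Nat.add_sub_cancel' x.2

lemma tail_sq (a : ℕ) (ha : 1 ≤ a) :
    ∑' x : ℕ, (if a ≤ x then (((x:ℕ):ℝ≥0∞)^2)⁻¹ else 0) ≤ 2 / (a:ℝ≥0∞) := by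
  -- rewrite as sum over shifted index
  have hsupp : Function.support (fun x : ℕ => if a ≤ x then (((x:ℕ):ℝ≥0∞)^2)⁻¹ else 0)
      ⊆ {x | a ≤ x} := by
    intro x hx
    by_contra h
    simp [Set.mem_setOf_eq] at h
    simp [Function.mem_support, if_neg (by omega : ¬ a ≤ x)] at hx
  rw [← tsum_subtype_eq_of_support_subset hsupp]
  rw [← (shiftEquiv a).tsum_eq]
  have hterm : ∀ i : ℕ, (fun x : ↑{x : ℕ | a ≤ x} =>
      if a ≤ (x:ℕ) then (((x:ℕ):ℝ≥0∞)^2)⁻¹ else 0) (shiftEquiv a i)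
      ≤ ENNReal.ofReal (2/((a:ℝ)+i) - 2/((a:ℝ)+i+1)) := by
    intro i
    have hx : (1:ℝ) ≤ (a:ℝ) + i := by
      have : (1:ℝ) ≤ (a:ℝ) := by exact_mod_cast ha
      linarith [Nat.cast_nonneg (α := ℝ) i]
    show (if a ≤ (a + i) then (((a + i : ℕ):ℝ≥0∞)^2)⁻¹ else 0) ≤ _
    rw [if_pos (Nat.le_add_right a i)]
    have heq : (((a + i :ℕ):ℝ≥0∞)^2)⁻¹ = ENNReal.ofReal ((((a:ℝ)+i)^2)⁻¹) := by
      rw [ENNReal.ofReal_inv_of_pos (by positivity), ENNReal.ofReal_pow (by positivity),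
          ENNReal.ofReal_add (by positivity) (by positivity), ENNReal.ofReal_natCast,
          ENNReal.ofReal_natCast]
      push_cast
      rfl
    rw [heq]
    exact ENNReal.ofReal_le_ofReal (real_ineq _ hx)
  refine le_trans (ENNReal.tsum_le_tsum hterm) ?_
  refine Summable.tsum_le_of_sum_le ENNReal.summable ?_
  intro s
  obtain ⟨N, hN⟩ := Finset.exists_nat_subset_range s
  refine le_trans (Finset.sum_le_sum_of_subset hN) ?_
  rw [← ENNReal.ofReal_sum_of_nonneg]
  · rw [telescope]
    refine le_trans (ENNReal.ofReal_le_ofReal (by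
      have : (0:ℝ) ≤ 2/((a:ℝ)+N) := by positivity
      linarith : (2:ℝ)/a - 2/(a+N) ≤ 2/a)) ?_
    rw [ENNReal.ofReal_div_of_pos (by exact_mod_cast ha)]
    simp [ENNReal.ofReal_natCast]
  · intro i _
    have hx : (1:ℝ) ≤ (a:ℝ) + i := by
      have : (1:ℝ) ≤ (a:ℝ) := by exact_mod_cast ha
      linarith [Nat.cast_nonneg (α := ℝ) i]
    have := real_ineq _ hx
    have h2 : (0:ℝ) ≤ (((a:ℝ)+i)^2)⁻¹ := by positivity
    linarith

lemma tail_pow (K a : ℕ) (hK : 2 ≤ K) (ha : 1 ≤ a) :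
    ∑' x : ℕ, (if a ≤ x then (((x:ℕ):ℝ≥0∞)^K)⁻¹ else 0) ≤ 2 / (a:ℝ≥0∞) := by
  refine le_trans (ENNReal.tsum_le_tsum (fun x => ?_)) (tail_sq a ha)
  by_cases h : a ≤ x
  · simp only [if_pos h]
    apply ENNReal.inv_le_inv.2
    refine pow_le_pow_right₀ ?_ hK
    exact_mod_cast le_trans ha h
  · simp [h]

lemma cons_cond_iff {n : ℕ} (x : ℕ) (t : Fin n → ℕ) (a : ℕ) :
    (Monotone (Fin.cons x t : Fin (n+1) → ℕ) ∧ ∀ j, a ≤ (Fin.cons x t : Fin (n+1) → ℕ) j)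
      ↔ (a ≤ x ∧ (Monotone t ∧ ∀ j, x ≤ t j)) := by
  constructor
  · rintro ⟨hm, hb⟩
    refine ⟨by simpa using hb 0, fun i j hij => ?_, fun j => ?_⟩
    · have := hm (Fin.succ_le_succ_iff.2 hij)
      simpa using this
    · have := hm (Fin.zero_le j.succ)
      simpa using this
  · rintro ⟨hax, hm, hx⟩
    constructor
    · intro i j hij
      rcases Fin.eq_zero_or_eq_succ i with rfl | ⟨i', rfl⟩ <;>
        rcases Fin.eq_zero_or_eq_succ j with rfl | ⟨j', rfl⟩
      · exact le_refl _
      · simpa using hx j'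
      · exact absurd (Fin.le_zero_iff.1 hij) (Fin.succ_ne_zero i')
      · simp only [Fin.cons_succ]
        exact hm (Fin.succ_le_succ_iff.1 hij)
    · intro j
      refine Fin.cases ?_ (fun j' => ?_) j
      · simpa using hax
      · simpa using le_trans hax (hx j')

lemma chain_sum : ∀ (n : ℕ) (hn : 1 ≤ n) (k : Fin n → ℕ), (∀ j, 1 ≤ k j) →
    2 ≤ k ⟨n-1, Nat.sub_lt hn Nat.one_pos⟩ → ∀ a : ℕ, 1 ≤ a →
    ∑' b : Fin n → ℕ,
        (if Monotone b ∧ ∀ j, a ≤ b j then (∏ j, ((b j : ℕ):ℝ≥0∞)^(k j))⁻¹ else 0)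
      ≤ 2^n / (a:ℝ≥0∞) := by
  intro n hn
  induction n, hn using Nat.le_induction with
  | base =>
    intro k hk hlast a ha
    rw [← ((Equiv.funUnique (Fin 1) ℕ).symm).tsum_eq]
    have hcong : ∀ x : ℕ,
        (if Monotone ((Equiv.funUnique (Fin 1) ℕ).symm x)
            ∧ ∀ j, a ≤ ((Equiv.funUnique (Fin 1) ℕ).symm x) j
          then (∏ j, ((((Equiv.funUnique (Fin 1) ℕ).symm x) j : ℕ):ℝ≥0∞)^(k j))⁻¹ else 0)
          = (if a ≤ x then (((x:ℕ):ℝ≥0∞)^(k 0))⁻¹ else 0) := by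
      intro x
      have hmono : Monotone ((Equiv.funUnique (Fin 1) ℕ).symm x) := fun _ _ _ => le_refl _
      by_cases h : a ≤ x
      · rw [if_pos ⟨hmono, fun _ => h⟩, if_pos h, Fin.prod_univ_one]
        rfl
      · rw [if_neg, if_neg h]
        rintro ⟨-, hb⟩
        exact h (hb 0)
    rw [tsum_congr hcong]
    have h0 : (0 : Fin 1) = ⟨0, by omega⟩ := rfl
    refine le_trans (tail_pow (k 0) a (by rw [h0]; exact hlast) ha) ?_
    rw [pow_one]
  | succ n hn IH =>
    intro k hk hlast a ha
    rw [← (Fin.consEquiv (fun _ : Fin (n+1) => ℕ)).tsum_eq, ENNReal.tsum_prod']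
    have key : ∀ x : ℕ,
        (∑' t : Fin n → ℕ,
          (if Monotone (Fin.consEquiv (fun _ : Fin (n+1) => ℕ) (x, t))
              ∧ ∀ j, a ≤ (Fin.consEquiv (fun _ : Fin (n+1) => ℕ) (x, t)) j
            then (∏ j, (((Fin.consEquiv (fun _ : Fin (n+1) => ℕ) (x, t)) j : ℕ):ℝ≥0∞)^(k j))⁻¹
            else 0))
        ≤ (if a ≤ x then 2^n * (((x:ℕ):ℝ≥0∞)^2)⁻¹ else 0) := by
      intro x
      have hF : ∀ t : Fin n → ℕ,
          (if Monotone (Fin.consEquiv (fun _ : Fin (n+1) => ℕ) (x, t))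
              ∧ ∀ j, a ≤ (Fin.consEquiv (fun _ : Fin (n+1) => ℕ) (x, t)) j
            then (∏ j, (((Fin.consEquiv (fun _ : Fin (n+1) => ℕ) (x, t)) j : ℕ):ℝ≥0∞)^(k j))⁻¹
            else 0)
          = (if a ≤ x then (((x:ℕ):ℝ≥0∞)^(k 0))⁻¹ else 0)
            * (if Monotone t ∧ ∀ j, x ≤ t j
                then (∏ j : Fin n, ((t j : ℕ):ℝ≥0∞)^(k j.succ))⁻¹ else 0) := by
        intro t
        show (if Monotone (Fin.cons x t : Fin (n+1) → ℕ)
              ∧ ∀ j, a ≤ (Fin.cons x t : Fin (n+1) → ℕ) j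
            then (∏ j, (((Fin.cons x t : Fin (n+1) → ℕ) j : ℕ):ℝ≥0∞)^(k j))⁻¹ else 0) = _
        by_cases h1 : a ≤ x
        · by_cases h2 : Monotone t ∧ ∀ j, x ≤ t j
          · rw [if_pos ((cons_cond_iff x t a).2 ⟨h1, h2⟩), if_pos h1, if_pos h2,
              Fin.prod_univ_succ]
            simp only [Fin.cons_zero, Fin.cons_succ]
            rw [ENNReal.mul_inv (Or.inl ?_) (Or.inl ?_)]
            · exact pow_ne_zero _ (by exact_mod_cast (by omega : x ≠ 0))
            · exact ENNReal.pow_ne_top (ENNReal.natCast_ne_top x)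
          · rw [if_neg, if_neg h2, mul_zero]
            intro hc; exact h2 ((cons_cond_iff x t a).1 hc).2
        · rw [if_neg, if_neg h1, zero_mul]
          intro hc; exact h1 ((cons_cond_iff x t a).1 hc).1
      rw [tsum_congr hF, ENNReal.tsum_mul_left]
      by_cases h1 : a ≤ x
      · simp only [if_pos h1]
        have hx1 : 1 ≤ x := le_trans ha h1
        have hxc : (1:ℝ≥0∞) ≤ ((x:ℕ):ℝ≥0∞) := by exact_mod_cast hx1
        have hsucc : Fin.succ (⟨n-1, by omega⟩ : Fin n) = (⟨n+1-1, by omega⟩ : Fin (n+1)) := by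
          ext; simp only [Fin.val_succ]; omega
        have hlast' : 2 ≤ (fun j : Fin n => k j.succ) ⟨n-1, by omega⟩ := by
          show 2 ≤ k _; rw [hsucc]; exact hlast
        have hIH := IH (fun j => k j.succ) (fun j => hk _) hlast' x hx1
        have hinv : ((((x:ℕ)):ℝ≥0∞)^(k 0))⁻¹ ≤ ((((x:ℕ)):ℝ≥0∞))⁻¹ := by
          apply ENNReal.inv_le_inv.2
          calc ((x:ℕ):ℝ≥0∞) = ((x:ℕ):ℝ≥0∞)^1 := (pow_one _).symm
            _ ≤ ((x:ℕ):ℝ≥0∞)^(k 0) := pow_le_pow_right₀ hxc (hk 0)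
        refine le_trans (mul_le_mul' hinv hIH) ?_
        rw [div_eq_mul_inv, ENNReal.inv_pow]
        exact le_of_eq (by ring)
      · simp only [if_neg h1, zero_mul]
        exact le_refl _
    refine le_trans (ENNReal.tsum_le_tsum key) ?_
    have : ∀ x : ℕ, (if a ≤ x then 2^n * (((x:ℕ):ℝ≥0∞)^2)⁻¹ else 0)
        = 2^n * (if a ≤ x then (((x:ℕ):ℝ≥0∞)^2)⁻¹ else 0) := by
      intro x; by_cases h : a ≤ x <;> simp [h]
    rw [tsum_congr this, ENNReal.tsum_mul_left]
    refine le_trans (mul_le_mul_right (tail_sq a ha) _) ?_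
    rw [div_eq_mul_inv, div_eq_mul_inv, ← mul_assoc, pow_succ]


/-- Product `∏_j b_j^{-k_j}` over the row entries `b₂ ≤ ⋯ ≤ b_r`. -/
noncomputable def rowProd {n : ℕ} (k : Fin n → ℕ) (b : Fin n → ℕ) : ℝ :=
  (∏ j, ((b j : ℝ)) ^ (k j))⁻¹

/-- Elementary factorial value of hook `(r,1)` with chain length 1:
`ζ_{(r,1),1}((u,𝐤;v),(t)) = Σ_{m ≥ 1, a ≤ b, a < c} m^{-t}(m+a)^{-u}(m+c)^{-v} ∏ b_j^{-k_j}`. -/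
noncomputable def ef1 {n : ℕ} (k : Fin n → ℕ) (u v t : ℕ) : ℝ :=
  ∑' x : {x : (ℕ × ℕ × ℕ) × (Fin n → ℕ) //
      0 < x.1.1 ∧ 0 < x.1.2.1 ∧ x.1.2.1 < x.1.2.2 ∧ Monotone x.2 ∧ ∀ j, x.1.2.1 ≤ x.2 j},
    ((x.1.1.1 : ℝ) ^ t * ((x.1.1.1 + x.1.1.2.1 : ℕ) : ℝ) ^ u
        * ((x.1.1.1 + x.1.1.2.2 : ℕ) : ℝ) ^ v)⁻¹ * rowProd k x.1.2

/-- Elementary factorial value with chain length 2: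
`ζ_{(r,1),2}((u,𝐤;v),(t₁,t₂)) = Σ_{m₁<m₂, fillings} m₁^{-t₁} m₂^{-t₂} (m₂+a)^{-u}(m₂+c)^{-v} ∏ b^{-k}`. -/
noncomputable def ef2 {n : ℕ} (k : Fin n → ℕ) (u v t₁ t₂ : ℕ) : ℝ :=
  ∑' x : {x : (ℕ × ℕ × ℕ × ℕ) × (Fin n → ℕ) //
      0 < x.1.1 ∧ x.1.1 < x.1.2.1 ∧ 0 < x.1.2.2.1 ∧ x.1.2.2.1 < x.1.2.2.2
        ∧ Monotone x.2 ∧ ∀ j, x.1.2.2.1 ≤ x.2 j},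
    ((x.1.1.1 : ℝ) ^ t₁ * (x.1.1.2.1 : ℝ) ^ t₂ * ((x.1.1.2.1 + x.1.1.2.2.1 : ℕ) : ℝ) ^ u
        * ((x.1.1.2.1 + x.1.1.2.2.2 : ℕ) : ℝ) ^ v)⁻¹ * rowProd k x.1.2

lemma rowProd_nonneg {n : ℕ} (k b : Fin n → ℕ) : 0 ≤ rowProd k b := by
  unfold rowProd; positivity

noncomputable def g1 {n : ℕ} (k : Fin n → ℕ) (t : ℕ) (x : (ℕ × ℕ × ℕ) × (Fin n → ℕ)) : ℝ≥0∞ :=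
  ENNReal.ofReal (((x.1.1 : ℝ) ^ t * ((x.1.1 + x.1.2.1 : ℕ) : ℝ) ^ 1
      * ((x.1.1 + x.1.2.2 : ℕ) : ℝ) ^ 2)⁻¹ * rowProd k x.2)

noncomputable def g2 {n : ℕ} (k : Fin n → ℕ) (y : (ℕ × ℕ × ℕ × ℕ) × (Fin n → ℕ)) : ℝ≥0∞ :=
  ENNReal.ofReal (((y.1.1 : ℝ) ^ 2 * (y.1.2.1 : ℝ) ^ 2 * ((y.1.2.1 + y.1.2.2.1 : ℕ) : ℝ) ^ 1
      * ((y.1.2.1 + y.1.2.2.2 : ℕ) : ℝ) ^ 2)⁻¹ * rowProd k y.2)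

noncomputable def gE {n : ℕ} (k : Fin n → ℕ) (y : (ℕ × ℕ × ℕ × ℕ) × (Fin n → ℕ)) : ℝ≥0∞ :=
  ENNReal.ofReal (((y.1.1 : ℝ) ^ 2 * (y.1.2.1 : ℝ) ^ 2 * ((y.1.1 + y.1.2.2.1 : ℕ) : ℝ)
      * ((y.1.1 + y.1.2.2.2 : ℕ) : ℝ) ^ 2)⁻¹ * rowProd k y.2)

noncomputable def gM (p : ℕ) : ℝ≥0∞ := ENNReal.ofReal (((p : ℝ)) ^ 2)⁻¹


lemma ef1_eq {n : ℕ} (k : Fin n → ℕ) (t : ℕ) :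
    ef1 k 1 2 t = (∑' x : {x : (ℕ × ℕ × ℕ) × (Fin n → ℕ) //
      0 < x.1.1 ∧ 0 < x.1.2.1 ∧ x.1.2.1 < x.1.2.2 ∧ Monotone x.2 ∧ ∀ j, x.1.2.1 ≤ x.2 j},
      g1 k t x.1).toReal := by
  unfold ef1 g1
  rw [ENNReal.tsum_toReal_eq (fun _ => ENNReal.ofReal_ne_top)]
  refine tsum_congr fun x => ?_
  rw [ENNReal.toReal_ofReal (mul_nonneg (by positivity) (rowProd_nonneg k _))]

lemma ef2_eq {n : ℕ} (k : Fin n → ℕ) :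
    ef2 k 1 2 2 2 = (∑' y : {x : (ℕ × ℕ × ℕ × ℕ) × (Fin n → ℕ) //
      0 < x.1.1 ∧ x.1.1 < x.1.2.1 ∧ 0 < x.1.2.2.1 ∧ x.1.2.2.1 < x.1.2.2.2
        ∧ Monotone x.2 ∧ ∀ j, x.1.2.2.1 ≤ x.2 j}, g2 k y.1).toReal := by
  unfold ef2 g2
  rw [ENNReal.tsum_toReal_eq (fun _ => ENNReal.ofReal_ne_top)]
  refine tsum_congr fun x => ?_
  rw [ENNReal.toReal_ofReal (mul_nonneg (by positivity) (rowProd_nonneg k _))]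

lemma eE_eq {n : ℕ} (k : Fin n → ℕ) :
    (∑' x : {x : (ℕ × ℕ × ℕ × ℕ) × (Fin n → ℕ) //
            0 < x.1.1 ∧ x.1.1 < x.1.2.1 ∧ 0 < x.1.2.2.1 ∧ x.1.2.2.1 < x.1.2.2.2
              ∧ Monotone x.2 ∧ ∀ j, x.1.2.2.1 ≤ x.2 j},
          ((x.1.1.1 : ℝ) ^ 2 * (x.1.1.2.1 : ℝ) ^ 2 * ((x.1.1.1 + x.1.1.2.2.1 : ℕ) : ℝ)
              * ((x.1.1.1 + x.1.1.2.2.2 : ℕ) : ℝ) ^ 2)⁻¹ * rowProd k x.1.2)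
      = (∑' y : {x : (ℕ × ℕ × ℕ × ℕ) × (Fin n → ℕ) //
      0 < x.1.1 ∧ x.1.1 < x.1.2.1 ∧ 0 < x.1.2.2.1 ∧ x.1.2.2.1 < x.1.2.2.2
        ∧ Monotone x.2 ∧ ∀ j, x.1.2.2.1 ≤ x.2 j}, gE k y.1).toReal := by
  unfold gE
  rw [ENNReal.tsum_toReal_eq (fun _ => ENNReal.ofReal_ne_top)]
  refine tsum_congr fun x => ?_
  rw [ENNReal.toReal_ofReal (mul_nonneg (by positivity) (rowProd_nonneg k _))]

lemma zeta_eq :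
    (∑' m : {m : ℕ // 0 < m}, (((m : ℕ) : ℝ) ^ 2)⁻¹)
      = (∑' m : {m : ℕ // 0 < m}, gM m.1).toReal := by
  unfold gM
  rw [ENNReal.tsum_toReal_eq (fun _ => ENNReal.ofReal_ne_top)]
  refine tsum_congr fun x => ?_
  rw [ENNReal.toReal_ofReal (by positivity)]

section equivs
variable {n : ℕ}

abbrev Idx1 (n : ℕ) := {x : (ℕ × ℕ × ℕ) × (Fin n → ℕ) //
      0 < x.1.1 ∧ 0 < x.1.2.1 ∧ x.1.2.1 < x.1.2.2 ∧ Monotone x.2 ∧ ∀ j, x.1.2.1 ≤ x.2 j}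

abbrev Idx2 (n : ℕ) := {x : (ℕ × ℕ × ℕ × ℕ) × (Fin n → ℕ) //
      0 < x.1.1 ∧ x.1.1 < x.1.2.1 ∧ 0 < x.1.2.2.1 ∧ x.1.2.2.1 < x.1.2.2.2
        ∧ Monotone x.2 ∧ ∀ j, x.1.2.2.1 ≤ x.2 j}

def eqC : Idx2 n ≃ ↑{t : Idx1 n × {m : ℕ // 0 < m} | t.2.1 < t.1.1.1.1} where
  toFun y := ⟨(⟨((y.1.1.2.1, y.1.1.2.2.1, y.1.1.2.2.2), y.1.2),
      ⟨lt_trans y.2.1 y.2.2.1, y.2.2.2.1, y.2.2.2.2.1, y.2.2.2.2.2.1, y.2.2.2.2.2.2⟩⟩,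
      ⟨y.1.1.1, y.2.1⟩), y.2.2.1⟩
  invFun t := ⟨((t.1.2.1, t.1.1.1.1.1, t.1.1.1.1.2.1, t.1.1.1.1.2.2), t.1.1.1.2),
      ⟨t.1.2.2, t.2, t.1.1.2.2.1, t.1.1.2.2.2.1, t.1.1.2.2.2.2.1, t.1.1.2.2.2.2.2⟩⟩
  left_inv y := rfl
  right_inv t := rfl

def eqD : Idx1 n ≃ ↑{t : Idx1 n × {m : ℕ // 0 < m} | t.2.1 = t.1.1.1.1} where
  toFun x := ⟨(x, ⟨x.1.1.1, x.2.1⟩), rfl⟩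
  invFun t := t.1.1
  left_inv x := rfl
  right_inv t := Subtype.ext (Prod.ext rfl (Subtype.ext t.2.symm))

def eqE : Idx2 n ≃ ↑{t : Idx1 n × {m : ℕ // 0 < m} | t.1.1.1.1 < t.2.1} where
  toFun y := ⟨(⟨((y.1.1.1, y.1.1.2.2.1, y.1.1.2.2.2), y.1.2),
      ⟨y.2.1, y.2.2.2.1, y.2.2.2.2.1, y.2.2.2.2.2.1, y.2.2.2.2.2.2⟩⟩,
      ⟨y.1.1.2.1, lt_trans y.2.1 y.2.2.1⟩), y.2.2.1⟩
  invFun t := ⟨((t.1.1.1.1.1, t.1.2.1, t.1.1.1.1.2.1, t.1.1.1.1.2.2), t.1.1.1.2),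
      ⟨t.1.1.2.1, t.2, t.1.1.2.2.1, t.1.1.2.2.2.1, t.1.1.2.2.2.2.1, t.1.1.2.2.2.2.2⟩⟩
  left_inv y := rfl
  right_inv t := rfl

end equivs

lemma part {n : ℕ} (k : Fin n → ℕ) :
    (∑' x : Idx1 n, g1 k 2 x.1) * (∑' m : {m : ℕ // 0 < m}, gM m.1)
      = (∑' y : Idx2 n, g2 k y.1) + (∑' x : Idx1 n, g1 k 4 x.1)
        + (∑' y : Idx2 n, gE k y.1) := by
  have expand : (∑' x : Idx1 n, g1 k 2 x.1) * (∑' m : {m : ℕ // 0 < m}, gM m.1)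
      = ∑' t : Idx1 n × {m : ℕ // 0 < m}, g1 k 2 t.1.1 * gM t.2.1 := by
    calc (∑' x : Idx1 n, g1 k 2 x.1) * (∑' m : {m : ℕ // 0 < m}, gM m.1)
        = ∑' x : Idx1 n, g1 k 2 x.1 * (∑' m : {m : ℕ // 0 < m}, gM m.1) :=
          ENNReal.tsum_mul_right.symm
      _ = ∑' x : Idx1 n, ∑' m : {m : ℕ // 0 < m}, g1 k 2 x.1 * gM m.1 :=
          tsum_congr fun x => ENNReal.tsum_mul_left.symm
      _ = _ := (ENNReal.tsum_prod' (f := fun t : Idx1 n × {m : ℕ // 0 < m} => g1 k 2 t.1.1 * gM t.2.1)).symm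
  rw [expand]
  have split : ∀ t : Idx1 n × {m : ℕ // 0 < m}, g1 k 2 t.1.1 * gM t.2.1 =
      (if t.2.1 < t.1.1.1.1 then g1 k 2 t.1.1 * gM t.2.1 else 0)
      + (if t.2.1 = t.1.1.1.1 then g1 k 2 t.1.1 * gM t.2.1 else 0)
      + (if t.1.1.1.1 < t.2.1 then g1 k 2 t.1.1 * gM t.2.1 else 0) := by
    intro t
    rcases lt_trichotomy t.2.1 t.1.1.1.1 with h | h | h
    · rw [if_pos h, if_neg h.ne, if_neg (lt_asymm h), add_zero, add_zero]
    · rw [if_neg (by rw [h]; exact lt_irrefl _), if_pos h,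
        if_neg (by rw [h]; exact lt_irrefl _), zero_add, add_zero]
    · rw [if_neg (lt_asymm h), if_neg (ne_of_gt h), if_pos h, zero_add, zero_add]
  rw [tsum_congr split, ENNReal.tsum_add, ENNReal.tsum_add]
  congr 1
  · congr 1
    · -- C part
      rw [← tsum_subtype_eq_of_support_subset
          (s := {t : Idx1 n × {m : ℕ // 0 < m} | t.2.1 < t.1.1.1.1}) ?_]
      · rw [← (eqC (n := n)).tsum_eq]
        refine tsum_congr fun y => ?_
        refine (if_pos (eqC y).2).trans ?_
        show g1 k 2 ((y.1.1.2.1, y.1.1.2.2.1, y.1.1.2.2.2), y.1.2) * gM y.1.1.1 = g2 k y.1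
        unfold g1 g2 gM
        rw [← ENNReal.ofReal_mul (mul_nonneg (by positivity) (rowProd_nonneg k _))]
        congr 1
        ring
      · intro t ht
        simp only [Function.mem_support] at ht
        by_contra h
        exact ht (if_neg h)
    · -- D part
      rw [← tsum_subtype_eq_of_support_subset
          (s := {t : Idx1 n × {m : ℕ // 0 < m} | t.2.1 = t.1.1.1.1}) ?_]
      · rw [← (eqD (n := n)).tsum_eq]
        refine tsum_congr fun x => ?_
        refine (if_pos (eqD x).2).trans ?_
        show g1 k 2 x.1 * gM x.1.1.1 = g1 k 4 x.1
        unfold g1 gM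
        rw [← ENNReal.ofReal_mul (mul_nonneg (by positivity) (rowProd_nonneg k _))]
        congr 1
        ring
      · intro t ht
        simp only [Function.mem_support] at ht
        by_contra h
        exact ht (if_neg h)
  · -- E part
    rw [← tsum_subtype_eq_of_support_subset
        (s := {t : Idx1 n × {m : ℕ // 0 < m} | t.1.1.1.1 < t.2.1}) ?_]
    · rw [← (eqE (n := n)).tsum_eq]
      refine tsum_congr fun y => ?_
      refine (if_pos (eqE y).2).trans ?_
      show g1 k 2 ((y.1.1.1, y.1.1.2.2.1, y.1.1.2.2.2), y.1.2) * gM y.1.1.2.1 = gE k y.1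
      unfold g1 gE gM
      rw [← ENNReal.ofReal_mul (mul_nonneg (by positivity) (rowProd_nonneg k _))]
      congr 1
      ring
    · intro t ht
      simp only [Function.mem_support] at ht
      by_contra h
      exact ht (if_neg h)

lemma ofReal_inv_pow_natCast (m t : ℕ) (hm : 0 < m) :
    ENNReal.ofReal ((((m:ℕ):ℝ))^t)⁻¹ = (((m:ℕ):ℝ≥0∞)^t)⁻¹ := by
  have hm' : (0:ℝ) < (m:ℝ) := by exact_mod_cast hm
  rw [ENNReal.ofReal_inv_of_pos (by positivity), ENNReal.ofReal_pow (by positivity),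
    ENNReal.ofReal_natCast]

lemma ofReal_inv_natCast (m : ℕ) (hm : 0 < m) :
    ENNReal.ofReal (((m:ℕ):ℝ))⁻¹ = (((m:ℕ):ℝ≥0∞))⁻¹ := by
  have hm' : (0:ℝ) < (m:ℝ) := by exact_mod_cast hm
  rw [ENNReal.ofReal_inv_of_pos hm', ENNReal.ofReal_natCast]

lemma g1_factored {n : ℕ} (k : Fin n → ℕ) (m a c : ℕ) (b : Fin n → ℕ)
    (hm : 0 < m) (hb : ∀ j, 0 < b j) :
    g1 k 2 ((m, a, c), b) = (((m:ℕ):ℝ≥0∞)^2)⁻¹ * (((m + a : ℕ):ℝ≥0∞))⁻¹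
      * (((m + c : ℕ):ℝ≥0∞)^2)⁻¹ * (∏ j, ((b j : ℕ):ℝ≥0∞)^(k j))⁻¹ := by
  unfold g1 rowProd
  have hrw : ((((m:ℕ):ℝ))^2 * (((m+a:ℕ)):ℝ)^1 * (((m+c:ℕ)):ℝ)^2)⁻¹
        * (∏ j, ((b j:ℝ))^(k j))⁻¹
      = ((((m:ℕ):ℝ))^2)⁻¹ * (((((m+a:ℕ)):ℝ)))⁻¹ * ((((((m+c:ℕ)):ℝ)))^2)⁻¹
        * (∏ j, ((b j:ℝ))^(k j))⁻¹ := by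
    rw [pow_one]; ring
  show ENNReal.ofReal _ = _
  rw [hrw, ENNReal.ofReal_mul (by positivity), ENNReal.ofReal_mul (by positivity),
    ENNReal.ofReal_mul (by positivity)]
  congr 1
  · congr 1
    · congr 1
      · exact ofReal_inv_pow_natCast m 2 hm
      · exact ofReal_inv_natCast (m+a) (by omega)
    · exact ofReal_inv_pow_natCast (m+c) 2 (by omega)
  · have hpos : (0:ℝ) < ∏ j, ((b j:ℝ))^(k j) := by
      refine Finset.prod_pos fun j _ => ?_
      have := hb j
      positivity
    rw [ENNReal.ofReal_inv_of_pos hpos,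
      ENNReal.ofReal_prod_of_nonneg (fun j _ => by positivity)]
    congr 1
    refine Finset.prod_congr rfl fun j _ => ?_
    rw [ENNReal.ofReal_pow (by positivity), ENNReal.ofReal_natCast]

lemma A_ne_top {n : ℕ} (k : Fin n → ℕ) (hn : 1 ≤ n) (hk : ∀ j, 1 ≤ k j)
    (hlast : 2 ≤ k ⟨n - 1, Nat.sub_lt hn Nat.one_pos⟩) :
    (∑' x : Idx1 n, g1 k 2 x.1) ≠ ∞ := by
  classical
  have h0 : (∑' x : Idx1 n, g1 k 2 x.1)
      = ∑' x : (ℕ × ℕ × ℕ) × (Fin n → ℕ),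
          (if 0 < x.1.1 ∧ 0 < x.1.2.1 ∧ x.1.2.1 < x.1.2.2 ∧ Monotone x.2 ∧ ∀ j, x.1.2.1 ≤ x.2 j
            then g1 k 2 x else 0) := by
    have e1 : (∑' x : Idx1 n, g1 k 2 x.1) = ∑' x : Idx1 n,
        (fun x : (ℕ × ℕ × ℕ) × (Fin n → ℕ) =>
          (if 0 < x.1.1 ∧ 0 < x.1.2.1 ∧ x.1.2.1 < x.1.2.2 ∧ Monotone x.2 ∧ ∀ j, x.1.2.1 ≤ x.2 j
            then g1 k 2 x else 0)) x.1 :=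
      tsum_congr fun x => (if_pos x.2).symm
    rw [e1]
    exact tsum_subtype_eq_of_support_subset
      (f := fun x : (ℕ × ℕ × ℕ) × (Fin n → ℕ) =>
        (if 0 < x.1.1 ∧ 0 < x.1.2.1 ∧ x.1.2.1 < x.1.2.2 ∧ Monotone x.2 ∧ ∀ j, x.1.2.1 ≤ x.2 j
          then g1 k 2 x else 0))
      (s := {x : (ℕ × ℕ × ℕ) × (Fin n → ℕ) |
        0 < x.1.1 ∧ 0 < x.1.2.1 ∧ x.1.2.1 < x.1.2.2 ∧ Monotone x.2 ∧ ∀ j, x.1.2.1 ≤ x.2 j})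
      (fun x hx => by
        simp only [Function.mem_support] at hx
        by_contra h
        exact hx (if_neg h))
  rw [h0]
  have L3 : ∀ m a c : ℕ, (∑' b : Fin n → ℕ,
        (if 0 < m ∧ 0 < a ∧ a < c ∧ Monotone b ∧ ∀ j, a ≤ b j
          then g1 k 2 ((m, a, c), b) else 0))
      ≤ (if 0 < m ∧ 0 < a ∧ a < c
          then (((m:ℕ):ℝ≥0∞)^2)⁻¹ * (((a:ℕ):ℝ≥0∞))⁻¹ * (((c:ℕ):ℝ≥0∞)^2)⁻¹
            * (2^n / ((a:ℕ):ℝ≥0∞)) else 0) := by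
    intro m a c
    by_cases h : 0 < m ∧ 0 < a ∧ a < c
    · obtain ⟨hm, ha, hac⟩ := h
      have hterm : ∀ b : Fin n → ℕ,
          (if 0 < m ∧ 0 < a ∧ a < c ∧ Monotone b ∧ ∀ j, a ≤ b j
            then g1 k 2 ((m, a, c), b) else 0)
          = ((((m:ℕ):ℝ≥0∞)^2)⁻¹ * (((m + a : ℕ):ℝ≥0∞))⁻¹ * (((m + c : ℕ):ℝ≥0∞)^2)⁻¹)
            * (if Monotone b ∧ ∀ j, a ≤ b j then (∏ j, ((b j : ℕ):ℝ≥0∞)^(k j))⁻¹ else 0) := by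
        intro b
        by_cases hb : Monotone b ∧ ∀ j, a ≤ b j
        · rw [if_pos ⟨hm, ha, hac, hb⟩, if_pos hb,
            g1_factored k m a c b hm (fun j => lt_of_lt_of_le ha (hb.2 j)), mul_assoc]
        · rw [if_neg (by tauto), if_neg hb, mul_zero]
      rw [tsum_congr hterm, ENNReal.tsum_mul_left, if_pos ⟨hm, ha, hac⟩]
      have hbnd := chain_sum n hn k hk hlast a ha
      refine le_trans (mul_le_mul_right hbnd _) ?_
      refine mul_le_mul' (mul_le_mul' (mul_le_mul' (le_refl _) ?_) ?_) (le_refl _)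
      · exact ENNReal.inv_le_inv.2 (by exact_mod_cast Nat.le_add_left a m)
      · refine ENNReal.inv_le_inv.2 (pow_le_pow_left₀ ?_ ?_ 2)
        · exact zero_le
        · exact_mod_cast Nat.le_add_left c m
    · have hterm : ∀ b : Fin n → ℕ,
          (if 0 < m ∧ 0 < a ∧ a < c ∧ Monotone b ∧ ∀ j, a ≤ b j
            then g1 k 2 ((m, a, c), b) else 0) = 0 := by
        intro b; rw [if_neg (by tauto)]
      rw [tsum_congr hterm, tsum_zero, if_neg h]
  have L2 : ∀ m a : ℕ, (∑' c : ℕ,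
        (if 0 < m ∧ 0 < a ∧ a < c
          then (((m:ℕ):ℝ≥0∞)^2)⁻¹ * (((a:ℕ):ℝ≥0∞))⁻¹ * (((c:ℕ):ℝ≥0∞)^2)⁻¹
            * (2^n / ((a:ℕ):ℝ≥0∞)) else 0))
      ≤ (if 0 < m ∧ 0 < a
          then (((m:ℕ):ℝ≥0∞)^2)⁻¹ * (2^(n+1) * ((((a:ℕ)):ℝ≥0∞)^3)⁻¹) else 0) := by
    intro m a
    by_cases h : 0 < m ∧ 0 < a
    · obtain ⟨hm, ha⟩ := h
      have hterm : ∀ c : ℕ,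
          (if 0 < m ∧ 0 < a ∧ a < c
            then (((m:ℕ):ℝ≥0∞)^2)⁻¹ * (((a:ℕ):ℝ≥0∞))⁻¹ * (((c:ℕ):ℝ≥0∞)^2)⁻¹
              * (2^n / ((a:ℕ):ℝ≥0∞)) else 0)
          ≤ ((((m:ℕ):ℝ≥0∞)^2)⁻¹ * (((a:ℕ):ℝ≥0∞))⁻¹ * (2^n / ((a:ℕ):ℝ≥0∞)))
            * (if a ≤ c then (((c:ℕ):ℝ≥0∞)^2)⁻¹ else 0) := by
        intro c
        by_cases hc : a < c
        · rw [if_pos ⟨hm, ha, hc⟩, if_pos (le_of_lt hc)]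
          exact le_of_eq (by ring)
        · rw [if_neg (by tauto)]
          exact zero_le
      refine le_trans (ENNReal.tsum_le_tsum hterm) ?_
      rw [ENNReal.tsum_mul_left, if_pos ⟨hm, ha⟩]
      refine le_trans (mul_le_mul_right (tail_sq a ha) _) ?_
      refine le_of_eq ?_
      rw [div_eq_mul_inv, div_eq_mul_inv, pow_succ]
      have h3 : ((((a:ℕ)):ℝ≥0∞)^3)⁻¹ = ((((a:ℕ)):ℝ≥0∞)⁻¹)^3 := ENNReal.inv_pow
      rw [h3]
      ring
    · have hterm : ∀ c : ℕ,
          (if 0 < m ∧ 0 < a ∧ a < c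
            then (((m:ℕ):ℝ≥0∞)^2)⁻¹ * (((a:ℕ):ℝ≥0∞))⁻¹ * (((c:ℕ):ℝ≥0∞)^2)⁻¹
              * (2^n / ((a:ℕ):ℝ≥0∞)) else 0) = 0 := by
        intro c; rw [if_neg (by tauto)]
      rw [tsum_congr hterm, tsum_zero, if_neg h]
  have L1 : ∀ m : ℕ, (∑' a : ℕ,
        (if 0 < m ∧ 0 < a
          then (((m:ℕ):ℝ≥0∞)^2)⁻¹ * (2^(n+1) * ((((a:ℕ)):ℝ≥0∞)^3)⁻¹) else 0))
      ≤ (if 0 < m then (((m:ℕ):ℝ≥0∞)^2)⁻¹ * 2^(n+2) else 0) := by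
    intro m
    by_cases hm : 0 < m
    · have hterm : ∀ a : ℕ,
          (if 0 < m ∧ 0 < a
            then (((m:ℕ):ℝ≥0∞)^2)⁻¹ * (2^(n+1) * ((((a:ℕ)):ℝ≥0∞)^3)⁻¹) else 0)
          = ((((m:ℕ):ℝ≥0∞)^2)⁻¹ * 2^(n+1))
            * (if 1 ≤ a then ((((a:ℕ)):ℝ≥0∞)^3)⁻¹ else 0) := by
        intro a
        by_cases ha : 0 < a
        · rw [if_pos ⟨hm, ha⟩, if_pos (by omega : 1 ≤ a)]
          ring
        · rw [if_neg (by tauto), if_neg (by omega : ¬ 1 ≤ a), mul_zero]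
      rw [tsum_congr hterm, ENNReal.tsum_mul_left, if_pos hm]
      refine le_trans (mul_le_mul_right (tail_pow 3 1 (by norm_num) (le_refl 1)) _) ?_
      refine le_of_eq ?_
      rw [Nat.cast_one, div_one, pow_succ]
      ring
    · have hterm : ∀ a : ℕ,
          (if 0 < m ∧ 0 < a
            then (((m:ℕ):ℝ≥0∞)^2)⁻¹ * (2^(n+1) * ((((a:ℕ)):ℝ≥0∞)^3)⁻¹) else 0) = 0 := by
        intro a; rw [if_neg (by tauto)]
      rw [tsum_congr hterm, tsum_zero, if_neg hm]
  have L0 : (∑' m : ℕ, (if 0 < m then (((m:ℕ):ℝ≥0∞)^2)⁻¹ * 2^(n+2) else 0))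
      ≤ 2 * 2^(n+2) := by
    have hterm : ∀ m : ℕ,
        (if 0 < m then (((m:ℕ):ℝ≥0∞)^2)⁻¹ * 2^(n+2) else 0)
        = (2:ℝ≥0∞)^(n+2) * (if 1 ≤ m then (((m:ℕ):ℝ≥0∞)^2)⁻¹ else 0) := by
      intro m
      by_cases hm : 0 < m
      · rw [if_pos hm, if_pos (by omega : 1 ≤ m)]; ring
      · rw [if_neg hm, if_neg (by omega : ¬ 1 ≤ m), mul_zero]
    rw [tsum_congr hterm, ENNReal.tsum_mul_left]
    refine le_trans (mul_le_mul_right (tail_sq 1 (le_refl 1)) _) ?_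
    rw [Nat.cast_one, div_one]
    exact le_of_eq (mul_comm _ _)
  have step : (∑' x : (ℕ × ℕ × ℕ) × (Fin n → ℕ),
      (if 0 < x.1.1 ∧ 0 < x.1.2.1 ∧ x.1.2.1 < x.1.2.2 ∧ Monotone x.2 ∧ ∀ j, x.1.2.1 ≤ x.2 j
        then g1 k 2 x else 0)) ≤ 2 * 2^(n+2) := by
    rw [ENNReal.tsum_prod', ENNReal.tsum_prod']
    refine le_trans (ENNReal.tsum_le_tsum (fun m => ?_)) L0
    refine le_trans (le_of_eq (ENNReal.tsum_prod'
      (f := fun r : ℕ × ℕ => ∑' b : Fin n → ℕ,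
        (if 0 < m ∧ 0 < r.1 ∧ r.1 < r.2 ∧ Monotone b ∧ ∀ j, r.1 ≤ b j
          then g1 k 2 ((m, r), b) else 0)))) ?_
    refine le_trans (ENNReal.tsum_le_tsum (fun a =>
      le_trans (ENNReal.tsum_le_tsum (fun c => L3 m a c)) (L2 m a))) (L1 m)
  exact ne_top_of_le_ne_top
    (ENNReal.mul_ne_top ENNReal.ofNat_ne_top (ENNReal.pow_ne_top ENNReal.ofNat_ne_top)) step

lemma M_ne_top : (∑' m : {m : ℕ // 0 < m}, gM m.1) ≠ ∞ := by
  classical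
  have h0 : (∑' m : {m : ℕ // 0 < m}, gM m.1)
      = ∑' m : ℕ, (if 0 < m then gM m else 0) := by
    have e1 : (∑' m : {m : ℕ // 0 < m}, gM m.1)
        = ∑' m : {m : ℕ // 0 < m}, (fun m : ℕ => if 0 < m then gM m else 0) m.1 :=
      tsum_congr fun m => (if_pos m.2).symm
    rw [e1]
    exact tsum_subtype_eq_of_support_subset
      (f := fun m : ℕ => if 0 < m then gM m else 0)
      (s := {m : ℕ | 0 < m})
      (fun m hm => by
        simp only [Function.mem_support] at hm
        by_contra h
        exact hm (if_neg h))
  rw [h0]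
  have hb : ∀ m : ℕ, (if 0 < m then gM m else 0)
      ≤ (if 1 ≤ m then (((m:ℕ):ℝ≥0∞)^2)⁻¹ else 0) := by
    intro m
    by_cases hm : 0 < m
    · rw [if_pos hm, if_pos (by omega : 1 ≤ m)]
      unfold gM
      rw [ofReal_inv_pow_natCast m 2 hm]
    · rw [if_neg hm]
      exact zero_le
  refine ne_top_of_le_ne_top (b := 2 / ((1:ℕ):ℝ≥0∞)) ?_
    (le_trans (ENNReal.tsum_le_tsum hb) (tail_sq 1 (le_refl 1)))
  rw [Nat.cast_one, div_one]
  exact ENNReal.ofNat_ne_top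

/-- Harmonic-type product identity for elementary factorial values:
`ζ_{(r,1),1}((1,𝐤;2),(2))·ζ(2) = ζ_{(r,1),2}((1,𝐤;2),(2,2)) + ζ_{(r,1),1}((1,𝐤;2),(4))`
`+ Σ_{m₁<m₂, fillings} (∏ b^{-k}) / (m₁² m₂² (m₁+a)(m₁+c)²)`. -/
theorem harmonic_product_ef (n : ℕ) (hn : 1 ≤ n) (k : Fin n → ℕ)
    (hk : ∀ j, 1 ≤ k j) (hlast : 2 ≤ k ⟨n - 1, by omega⟩) :
    ef1 k 1 2 2 * (∑' m : {m : ℕ // 0 < m}, (((m : ℕ) : ℝ) ^ 2)⁻¹) =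
      ef2 k 1 2 2 2 + ef1 k 1 2 4
        + ∑' x : {x : (ℕ × ℕ × ℕ × ℕ) × (Fin n → ℕ) //
            0 < x.1.1 ∧ x.1.1 < x.1.2.1 ∧ 0 < x.1.2.2.1 ∧ x.1.2.2.1 < x.1.2.2.2
              ∧ Monotone x.2 ∧ ∀ j, x.1.2.2.1 ≤ x.2 j},
          ((x.1.1.1 : ℝ) ^ 2 * (x.1.1.2.1 : ℝ) ^ 2 * ((x.1.1.1 + x.1.1.2.2.1 : ℕ) : ℝ)
              * ((x.1.1.1 + x.1.1.2.2.2 : ℕ) : ℝ) ^ 2)⁻¹ * rowProd k x.1.2 := by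
  have hA := A_ne_top k hn hk hlast
  have hM := M_ne_top
  have hprod := part k
  have hCDE : (∑' y : Idx2 n, g2 k y.1) + (∑' x : Idx1 n, g1 k 4 x.1)
      + (∑' y : Idx2 n, gE k y.1) ≠ ⊤ := by
    rw [← hprod]; exact ENNReal.mul_ne_top hA hM
  have h1 := ENNReal.add_ne_top.1 hCDE
  have h2 := ENNReal.add_ne_top.1 h1.1
  rw [ef1_eq k 2, ef1_eq k 4, ef2_eq k, zeta_eq, eE_eq k,
    ← ENNReal.toReal_mul, hprod, ENNReal.toReal_add h1.1 h1.2,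
    ENNReal.toReal_add h2.1 h2.2]
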